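/- Assume G_d < G. If (k_t, p_t)_{t≥0} and (k'_t, p'_t)_{t≥0} are both asymptotically bubbly equilibria with the same initial capital and the same dividends, then k_t = k'_t and p_t = p'_t for all t. Moreover, if (k_t, p_t) is an asymptotically bubbly equilibrium and (k'_t, p'_t) is any equilibrium with the same initial capital and dividends, then p'_0 ≤ p_0. -/

import Mathlib

open Filter Topology Set

noncomputable section

/-- Standing assumptions on the production function `f` with derivative `f'` and
second derivative `f''`: `f : (0,∞) → (0,∞)` is twice continuously differentiable,
`f' > 0`, `f'' < 0`, `f'(k) → ∞` as `k → 0+`, and `lim_{k→∞} f'(k) < G`. -/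
def ProdAssump (G : ℝ) (f f' f'' : ℝ → ℝ) : Prop :=
  0 < G ∧
  (∀ k > (0:ℝ), 0 < f k) ∧
  (∀ k > (0:ℝ), HasDerivAt f (f' k) k) ∧
  (∀ k > (0:ℝ), HasDerivAt f' (f'' k) k) ∧
  ContinuousOn f'' (Ioi 0) ∧
  (∀ k > (0:ℝ), 0 < f' k) ∧
  (∀ k > (0:ℝ), f'' k < 0) ∧
  Tendsto f' (nhdsWithin 0 (Ioi 0)) atTop ∧
  (∃ L < G, Tendsto f' atTop (nhds L))

/-- Standing assumptions on the savings function: continuous, `0 < s(w,R) < w`,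
strictly increasing in `w`, nondecreasing in `R`. -/
def SavAssump (s : ℝ → ℝ → ℝ) : Prop :=
  ContinuousOn (fun wR : ℝ × ℝ => s wR.1 wR.2) (Ioi 0 ×ˢ Ioi 0) ∧
  (∀ w > (0:ℝ), ∀ R > (0:ℝ), 0 < s w R ∧ s w R < w) ∧
  (∀ R > (0:ℝ), StrictMonoOn (fun w => s w R) (Ioi 0)) ∧
  (∀ w > (0:ℝ), MonotoneOn (fun R => s w R) (Ioi 0))

/-- The savings function arises from a continuous, quasi-concave, strictly increasing
utility `U` on `(0,∞)²`: `s w R` is the unique maximizer of `σ ↦ U (w - σ) (R σ)`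
over `(0, w)`. -/
def SavFromUtility (s : ℝ → ℝ → ℝ) : Prop :=
  ∃ U : ℝ → ℝ → ℝ,
    ContinuousOn (fun c : ℝ × ℝ => U c.1 c.2) (Ioi 0 ×ˢ Ioi 0) ∧
    QuasiconcaveOn ℝ (Ioi 0 ×ˢ Ioi 0) (fun c : ℝ × ℝ => U c.1 c.2) ∧
    (∀ c c' : ℝ × ℝ, c ∈ Ioi (0:ℝ) ×ˢ Ioi (0:ℝ) → c' ∈ Ioi (0:ℝ) ×ˢ Ioi (0:ℝ) →
      c.1 ≤ c'.1 → c.2 ≤ c'.2 → c ≠ c' → U c.1 c.2 < U c'.1 c'.2) ∧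
    (∀ w > (0:ℝ), ∀ R > (0:ℝ), s w R ∈ Ioo 0 w ∧
      ∀ σ ∈ Ioo (0:ℝ) w, σ ≠ s w R → U (w - σ) (R * σ) < U (w - s w R) (R * s w R))

/-- An equilibrium: sequences `k, p` with `k t > 0`, `p t ≥ 0`, `k 0 = k₀`,
the capital accumulation equation and the no-arbitrage price equation. -/
def IsEquilibrium (G : ℝ) (f f' : ℝ → ℝ) (s : ℝ → ℝ → ℝ) (k0 : ℝ) (d : ℕ → ℝ)
    (k p : ℕ → ℝ) : Prop :=
  (∀ t, 0 < k t) ∧ (∀ t, 0 ≤ p t) ∧ k 0 = k0 ∧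
  (∀ t, G * k (t + 1) + p t = s (f (k t) - k t * f' (k t)) (f' (k (t + 1)))) ∧
  (∀ t, p (t + 1) = f' (k (t + 1)) / G * p t - d (t + 1))

/-- Arrow–Debreu date-0 price `q_t = 1/(R_1 ⋯ R_t)` where `R_t = f'(k_t)`. -/
def qseq (f' : ℝ → ℝ) (k : ℕ → ℝ) (t : ℕ) : ℝ :=
  (∏ i ∈ Finset.range t, f' (k (i + 1)))⁻¹

/-- Undetrended dividend `D_t = G^t d_t`. -/
def Dseq (G : ℝ) (d : ℕ → ℝ) (t : ℕ) : ℝ := G ^ t * d t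

/-- Detrended fundamental value `v_t = G^{-t} q_t^{-1} ∑_{s>t} q_s D_s`. -/
def fundval (G : ℝ) (f' : ℝ → ℝ) (k : ℕ → ℝ) (d : ℕ → ℝ) (t : ℕ) : ℝ :=
  (G ^ t)⁻¹ * (qseq f' k t)⁻¹ * ∑' n : ℕ, qseq f' k (t + 1 + n) * Dseq G d (t + 1 + n)

/-- Detrended bubble component `b_t = p_t - v_t`. -/
def bubble (G : ℝ) (f' : ℝ → ℝ) (k p : ℕ → ℝ) (d : ℕ → ℝ) (t : ℕ) : ℝ :=
  p t - fundval G f' k d t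

/-- An equilibrium is bubbleless if `b_t = 0` for all `t`. -/
def Bubbleless (G : ℝ) (f' : ℝ → ℝ) (k p : ℕ → ℝ) (d : ℕ → ℝ) : Prop :=
  ∀ t, bubble G f' k p d t = 0

/-- An equilibrium is asymptotically bubbly if `liminf_{t→∞} b_t > 0`. -/
def AsympBubbly (G : ℝ) (f' : ℝ → ℝ) (k p : ℕ → ℝ) (d : ℕ → ℝ) : Prop :=
  0 < atTop.liminf (bubble G f' k p d)

/-- Long-run dividend growth rate `G_d = limsup_{t→∞} D_t^{1/t}` (as an extended real). -/
def GdGrowth (G : ℝ) (d : ℕ → ℝ) : EReal :=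
  atTop.limsup (fun t : ℕ => ((Dseq G d t ^ ((t : ℝ)⁻¹) : ℝ) : EReal))

/-- `x` solves the equation `G x + p = s(f(k) - k f'(k), f'(x))` with `x > 0`;
when the solution exists it is unique and denoted `g(k,p)`. -/
def IsGsol (G : ℝ) (f f' : ℝ → ℝ) (s : ℝ → ℝ → ℝ) (k p x : ℝ) : Prop :=
  0 < x ∧ G * x + p = s (f k - k * f' k) (f' x)

/-- Set of positive steady states: `𝒦 = {k > 0 : g(k,0) = k}`. -/
def Ksteady (G : ℝ) (f f' : ℝ → ℝ) (s : ℝ → ℝ → ℝ) : Set ℝ :=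
  {k : ℝ | 0 < k ∧ IsGsol G f f' s k 0 k}

/-- The equilibrium set `𝒫₀` of initial prices. -/
def P0set (G : ℝ) (f f' : ℝ → ℝ) (s : ℝ → ℝ → ℝ) (k0 : ℝ) (d : ℕ → ℝ) : Set ℝ :=
  {p0 : ℝ | ∃ k p : ℕ → ℝ, IsEquilibrium G f f' s k0 d k p ∧ p 0 = p0}

section Aux
variable {G : ℝ} {f f' f'' : ℝ → ℝ} {s : ℝ → ℝ → ℝ} {k0 : ℝ} {d k p : ℕ → ℝ}

def wage (f f' : ℝ → ℝ) (x : ℝ) : ℝ := f x - x * f' x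

lemma f'_anti (hf : ProdAssump G f f' f'') : StrictAntiOn f' (Ioi 0) := by
  obtain ⟨hG, hfp, hdf, hdf', hc, hf'p, hf''n, h0, hL⟩ := hf
  apply strictAntiOn_of_deriv_neg (convex_Ioi 0)
    (fun x hx => (hdf' x hx).differentiableAt.continuousAt.continuousWithinAt)
  intro x hx
  rw [interior_Ioi] at hx
  rw [(hdf' x hx).deriv]
  exact hf''n x hx

lemma f_mono (hf : ProdAssump G f f' f'') : StrictMonoOn f (Ioi 0) := by
  obtain ⟨hG, hfp, hdf, hdf', hc, hf'p, hf''n, h0, hL⟩ := hf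
  apply strictMonoOn_of_deriv_pos (convex_Ioi 0)
    (fun x hx => (hdf x hx).differentiableAt.continuousAt.continuousWithinAt)
  intro x hx
  rw [interior_Ioi] at hx
  rw [(hdf x hx).deriv]
  exact hf'p x hx

lemma wage_hasDeriv (hf : ProdAssump G f f' f'') {x : ℝ} (hx : x ∈ Ioi (0:ℝ)) :
    HasDerivAt (wage f f') (f' x - (1 * f' x + x * f'' x)) x := by
  obtain ⟨hG, hfp, hdf, hdf', hc, hf'p, hf''n, h0, hL⟩ := hf
  exact (hdf x hx).sub ((hasDerivAt_id x).mul (hdf' x hx))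

lemma wage_mono (hf : ProdAssump G f f' f'') : StrictMonoOn (wage f f') (Ioi 0) := by
  apply strictMonoOn_of_deriv_pos (convex_Ioi 0)
    (fun x hx => (wage_hasDeriv hf hx).differentiableAt.continuousAt.continuousWithinAt)
  intro x hx
  rw [interior_Ioi] at hx
  rw [(wage_hasDeriv hf hx).deriv]
  have := hf.2.2.2.2.2.2.1 x hx
  have hx' : (0:ℝ) < x := hx
  nlinarith

lemma wage_pos (hf : ProdAssump G f f' f'') {x : ℝ} (hx : (0:ℝ) < x) : 0 < wage f f' x := by
  have hanti := f'_anti hf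
  obtain ⟨hG, hfp, hdf, hdf', hc, hf'p, hf''n, h0, hL⟩ := hf
  have hcont : ∀ a b : ℝ, 0 < a → ContinuousOn f (Icc a b) := fun a b ha y hy =>
    (hdf y (lt_of_lt_of_le ha hy.1)).differentiableAt.continuousAt.continuousWithinAt
  have hE0 : 0 < f' (x/2) - f' x := by
    have := hanti (show x/2 ∈ Ioi (0:ℝ) by simp; linarith) (show x ∈ Ioi (0:ℝ) from hx)
      (by linarith)
    linarith
  set a := min (x/4) (x * (f' (x/2) - f' x) / (4 * f' (x/2))) with ha_def
  have hf'x2 : 0 < f' (x/2) := hf'p _ (by linarith)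
  have ha0 : 0 < a := by
    apply lt_min (by linarith)
    positivity
  have hax : a < x/2 := lt_of_le_of_lt (min_le_left _ _) (by linarith)
  have hD : a * f' (x/2) ≤ x * (f' (x/2) - f' x) / 4 := by
    calc a * f' (x/2) ≤ x * (f' (x/2) - f' x) / (4 * f' (x/2)) * f' (x/2) :=
          mul_le_mul_of_nonneg_right (min_le_right _ _) hf'x2.le
      _ = x * (f' (x/2) - f' x) / 4 := by field_simp
  obtain ⟨c1, hc1, hs1⟩ := exists_hasDerivAt_eq_slope f f' (show x/2 < x by linarith)
    (hcont _ _ (by linarith)) (fun y hy => hdf y (by obtain ⟨h1, h2⟩ := hy; linarith))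
  obtain ⟨c2, hc2, hs2⟩ := exists_hasDerivAt_eq_slope f f' (show a < x/2 from hax)
    (hcont _ _ ha0) (fun y hy => hdf y (by obtain ⟨h1, h2⟩ := hy; linarith))
  have hne1 : x - x/2 ≠ 0 := by intro h; linarith [h]
  have hne2 : x/2 - a ≠ 0 := by intro h; linarith [h]
  have h1 : f x - f (x/2) = (x - x/2) * f' c1 := by
    rw [hs1, mul_comm, div_mul_cancel₀ _ hne1]
  have h2 : f (x/2) - f a = (x/2 - a) * f' c2 := by
    rw [hs2, mul_comm, div_mul_cancel₀ _ hne2]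
  have hgt1 : f' x < f' c1 := hanti (show c1 ∈ Ioi (0:ℝ) by simp; linarith [hc1.1]) hx hc1.2
  have hgt2 : f' (x/2) < f' c2 :=
    hanti (show c2 ∈ Ioi (0:ℝ) by simp; linarith [hc2.1]) (show x/2 ∈ Ioi (0:ℝ) by simp; linarith) hc2.2
  have hA : (x/2) * f' x < f x - f (x/2) := by
    rw [h1]; have : (0:ℝ) < x - x/2 := by linarith
    nlinarith
  have hB : (x/2 - a) * f' (x/2) < f (x/2) - f a := by
    rw [h2]; have : (0:ℝ) < x/2 - a := by linarith
    nlinarith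
  have hfa : 0 < f a := hfp a ha0
  show 0 < f x - x * f' x
  nlinarith [hE0, hx]

lemma wage_eq (x : ℝ) : f x - x * f' x = wage f f' x := rfl

lemma eq_basic (hf : ProdAssump G f f' f'') (hs : SavAssump s)
    (heq : IsEquilibrium G f f' s k0 d k p) (t : ℕ) :
    0 < wage f f' (k t) ∧ p t < wage f f' (k t) ∧ G * k (t + 1) < wage f f' (k t) := by
  obtain ⟨hk, hp, hk0, hacc, hpr⟩ := heq
  have hw : 0 < wage f f' (k t) := wage_pos hf (hk t)
  have hR : 0 < f' (k (t + 1)) := hf.2.2.2.2.2.1 _ (hk (t + 1))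
  have hsb := hs.2.1 _ hw _ hR
  have h := hacc t
  rw [wage_eq] at h
  exact ⟨hw, by nlinarith [hk (t+1), hf.1, hsb.2], by nlinarith [hp t, hsb.2]⟩

lemma k_bound (hf : ProdAssump G f f' f'') (hs : SavAssump s)
    (heq : IsEquilibrium G f f' s k0 d k p) :
    ∃ M : ℝ, 0 < M ∧ k 0 ≤ M ∧ ∀ t, k t ≤ M := by
  have hmono := f_mono hf
  have hbasic := eq_basic hf hs heq
  obtain ⟨hG, hfp, hdf, hdf', hc, hf'p, hf''n, h0, L, hLG, hL⟩ := hf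
  have hk := heq.1
  have hL0 : 0 ≤ L := ge_of_tendsto hL (eventually_atTop.mpr
    ⟨1, fun x hx => (hf'p x (by linarith)).le⟩)
  set L' := (L + G) / 2 with hL'def
  have hL'0 : 0 < L' := by simp only [hL'def]; linarith
  have hL'G : L' < G := by simp only [hL'def]; linarith
  have hev : ∀ᶠ x in atTop, f' x < L' := hL.eventually (eventually_lt_nhds (by linarith))
  obtain ⟨K1, hK1⟩ := eventually_atTop.1 hev
  set K0 := max K1 1 with hK0def
  have hK0pos : (0:ℝ) < K0 := lt_of_lt_of_le one_pos (le_max_right _ _)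
  have hconc : ∀ x : ℝ, K0 ≤ x → f x ≤ f K0 + L' * (x - K0) := by
    intro x hx
    rcases eq_or_lt_of_le hx with h | h
    · rw [← h]; simp
    · obtain ⟨c, hc, hsc⟩ := exists_hasDerivAt_eq_slope f f' h
        (fun y hy => (hdf y (lt_of_lt_of_le hK0pos hy.1)).differentiableAt.continuousAt.continuousWithinAt)
        (fun y hy => hdf y (lt_trans hK0pos hy.1))
      have hne : x - K0 ≠ 0 := by intro hh; linarith
      have : f x - f K0 = (x - K0) * f' c := by rw [hsc, mul_comm, div_mul_cancel₀ _ hne]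
      have hcl : f' c < L' := hK1 c (le_trans (le_max_left _ _) hc.1.le)
      nlinarith [hc.1, hc.2]
  set M := max (k 0) (K0 + f K0 / (G - L')) with hMdef
  have hfK0 : 0 < f K0 := hfp _ hK0pos
  have hM0 : 0 < M := lt_of_lt_of_le (hk 0) (le_max_left _ _)
  refine ⟨M, hM0, le_max_left _ _, ?_⟩
  intro t
  induction t with
  | zero => exact le_max_left _ _
  | succ t ih =>
    have hstep : G * k (t + 1) < f (k t) := by
      have h1 := (hbasic t).2.2
      have h2 : 0 < k t * f' (k t) := mul_pos (hk t) (hf'p _ (hk t))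
      simp only [wage] at h1
      linarith
    have hM2 : K0 + f K0 / (G - L') ≤ M := le_max_right _ _
    rcases le_or_gt (k t) K0 with h | h
    · have : f (k t) ≤ f K0 := hmono.monotoneOn (hk t) hK0pos h
      have hdiv : f K0 / G ≤ f K0 / (G - L') :=
        div_le_div_of_nonneg_left hfK0.le (by linarith) (by linarith)
      have : k (t + 1) < f K0 / G := by rw [lt_div_iff₀ hG]; linarith
      linarith
    · have hfk : f (k t) ≤ f K0 + L' * (k t - K0) := hconc _ h.le
      have hkM : k t ≤ M := ih
      have : G * k (t+1) < f K0 + L' * (M - K0) := by nlinarith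
      have hgoal : f K0 + L' * (M - K0) ≤ G * M := by
        have h3 : (G - L') * M ≥ (G - L') * (K0 + f K0 / (G - L')) :=
          mul_le_mul_of_nonneg_left hM2 (by linarith)
        have h4 : (G - L') * (K0 + f K0 / (G - L')) = (G - L') * K0 + f K0 := by
          have hne : G - L' ≠ 0 := by intro hh; linarith
          field_simp
        nlinarith
      nlinarith

def PiP (G : ℝ) (f' : ℝ → ℝ) (k : ℕ → ℝ) (t : ℕ) : ℝ :=
  ∏ i ∈ Finset.range t, (f' (k (i + 1)) / G)

lemma prodf_pos (hf : ProdAssump G f f' f'') (hk : ∀ t, 0 < k t) (t : ℕ) :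
    0 < ∏ i ∈ Finset.range t, f' (k (i + 1)) :=
  Finset.prod_pos (fun i _ => hf.2.2.2.2.2.1 _ (hk (i+1)))

lemma qseq_pos (hf : ProdAssump G f f' f'') (hk : ∀ t, 0 < k t) (t : ℕ) :
    0 < qseq f' k t := inv_pos.2 (prodf_pos hf hk t)

lemma PiP_pos (hf : ProdAssump G f f' f'') (hk : ∀ t, 0 < k t) (t : ℕ) :
    0 < PiP G f' k t :=
  Finset.prod_pos (fun i _ => div_pos (hf.2.2.2.2.2.1 _ (hk (i+1))) hf.1)

lemma qseq_PiP (hf : ProdAssump G f f' f'') (hk : ∀ t, 0 < k t) (t : ℕ) :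
    qseq f' k t * G ^ t = (PiP G f' k t)⁻¹ := by
  unfold qseq PiP
  rw [Finset.prod_div_distrib, Finset.prod_const, Finset.card_range, inv_div, inv_mul_eq_div]

lemma telescope (hf : ProdAssump G f f' f'') (heq : IsEquilibrium G f f' s k0 d k p) (t : ℕ) :
    qseq f' k t * G ^ t * p t
      + ∑ n ∈ Finset.range t, qseq f' k (n+1) * Dseq G d (n+1) = p 0 := by
  induction t with
  | zero => simp [qseq]
  | succ t ih =>
    have hR : f' (k (t+1)) ≠ 0 := ne_of_gt (hf.2.2.2.2.2.1 _ (heq.1 (t+1)))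
    have hG0 : (G:ℝ) ≠ 0 := ne_of_gt hf.1
    have hq : qseq f' k (t+1) * f' (k (t+1)) = qseq f' k t := by
      unfold qseq
      rw [Finset.prod_range_succ, mul_inv, mul_assoc, inv_mul_cancel₀ hR, mul_one]
    have hpr := heq.2.2.2.2 t
    have key : qseq f' k (t+1) * G^(t+1) * p (t+1)
        = qseq f' k t * G^t * p t - qseq f' k (t+1) * Dseq G d (t+1) := by
      rw [hpr, ← hq]
      unfold Dseq
      field_simp
      ring
    rw [Finset.sum_range_succ]
    linarith [ih, key]

lemma partial_le (hf : ProdAssump G f f' f'') (heq : IsEquilibrium G f f' s k0 d k p) (t : ℕ) :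
    ∑ n ∈ Finset.range t, qseq f' k (n+1) * Dseq G d (n+1) ≤ p 0 := by
  have h := telescope hf heq t
  nlinarith [mul_nonneg (mul_pos (qseq_pos hf heq.1 t) (pow_pos hf.1 t)).le (heq.2.1 t)]

lemma qD_nonneg (hf : ProdAssump G f f' f'') (hd : ∀ t ≥ 1, 0 ≤ d t)
    (hk : ∀ t, 0 < k t) (n : ℕ) : 0 ≤ qseq f' k (n+1) * Dseq G d (n+1) :=
  mul_nonneg (qseq_pos hf hk (n+1)).le
    (mul_nonneg (pow_nonneg hf.1.le _) (hd (n+1) (by omega)))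

lemma summable_qD (hf : ProdAssump G f f' f'') (hd : ∀ t ≥ 1, 0 ≤ d t)
    (heq : IsEquilibrium G f f' s k0 d k p) :
    Summable (fun n => qseq f' k (n+1) * Dseq G d (n+1)) :=
  summable_of_sum_range_le (fun n => qD_nonneg hf hd heq.1 n) (fun t => partial_le hf heq t)

lemma fundval_nonneg (hf : ProdAssump G f f' f'') (hd : ∀ t ≥ 1, 0 ≤ d t)
    (hk : ∀ t, 0 < k t) (t : ℕ) : 0 ≤ fundval G f' k d t := by
  unfold fundval
  apply mul_nonneg (mul_nonneg (inv_nonneg.2 (pow_nonneg hf.1.le t))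
    (inv_nonneg.2 (qseq_pos hf hk t).le))
  apply tsum_nonneg
  intro n
  exact mul_nonneg (qseq_pos hf hk _).le
    (mul_nonneg (pow_nonneg hf.1.le _) (hd _ (by omega)))

lemma bubble_mul (hf : ProdAssump G f f' f'') (hd : ∀ t ≥ 1, 0 ≤ d t)
    (heq : IsEquilibrium G f f' s k0 d k p) (u : ℕ) :
    bubble G f' k p d u * (qseq f' k u * G ^ u)
      = p 0 - ∑' n : ℕ, qseq f' k (n+1) * Dseq G d (n+1) := by
  have hsum := summable_qD hf hd heq
  have hq := qseq_pos hf heq.1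
  have hGp : ∀ n : ℕ, (0:ℝ) < G ^ n := fun n => pow_pos hf.1 n
  have htail : (∑' n : ℕ, qseq f' k (u + 1 + n) * Dseq G d (u + 1 + n))
      = (∑' n : ℕ, qseq f' k (n+1) * Dseq G d (n+1))
        - ∑ n ∈ Finset.range u, qseq f' k (n+1) * Dseq G d (n+1) := by
    have h := hsum.sum_add_tsum_nat_add u
    have h2 : (∑' n : ℕ, qseq f' k (u+1+n) * Dseq G d (u+1+n))
        = ∑' n : ℕ, qseq f' k (n + u + 1) * Dseq G d (n + u + 1) := by
      apply tsum_congr; intro n; rw [show u+1+n = n+u+1 by omega]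
    rw [h2]
    linarith [h]
  have h1 : ((G:ℝ)^u)⁻¹ * (qseq f' k u)⁻¹ * (qseq f' k u * G ^ u) = 1 := by
    field_simp [mul_comm]
    rw [div_self (ne_of_gt (mul_pos (hGp u) (hq u)))]
  have expand : bubble G f' k p d u * (qseq f' k u * G ^ u)
      = qseq f' k u * G^u * p u - (((G:ℝ)^u)⁻¹ * (qseq f' k u)⁻¹ * (qseq f' k u * G^u))
          * (∑' n : ℕ, qseq f' k (u+1+n) * Dseq G d (u+1+n)) := by
    unfold bubble fundval; ring
  rw [expand, h1, one_mul, htail]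
  linarith [telescope hf heq u]

lemma bubble0_eq (hf : ProdAssump G f f' f'') (hd : ∀ t ≥ 1, 0 ≤ d t)
    (heq : IsEquilibrium G f f' s k0 d k p) :
    bubble G f' k p d 0 = p 0 - ∑' n : ℕ, qseq f' k (n+1) * Dseq G d (n+1) := by
  have := bubble_mul hf hd heq 0
  simpa [qseq] using this

lemma bubble_formula (hf : ProdAssump G f f' f'') (hd : ∀ t ≥ 1, 0 ≤ d t)
    (heq : IsEquilibrium G f f' s k0 d k p) (t : ℕ) :
    bubble G f' k p d t = bubble G f' k p d 0 * PiP G f' k t := by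
  have h := bubble_mul hf hd heq t
  rw [← bubble0_eq hf hd heq] at h
  rw [qseq_PiP hf heq.1 t, ← div_eq_mul_inv, div_eq_iff (ne_of_gt (PiP_pos hf heq.1 t))] at h
  exact h

lemma bubble0_nonneg (hf : ProdAssump G f f' f'') (hd : ∀ t ≥ 1, 0 ≤ d t)
    (heq : IsEquilibrium G f f' s k0 d k p) : 0 ≤ bubble G f' k p d 0 := by
  rw [bubble0_eq hf hd heq]
  have : (∑' n : ℕ, qseq f' k (n+1) * Dseq G d (n+1)) ≤ p 0 :=
    Real.tsum_le_of_sum_range_le (fun n => qD_nonneg hf hd heq.1 n) (fun t => partial_le hf heq t)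
  linarith

lemma bubble0_pos (hf : ProdAssump G f f' f'') (hd : ∀ t ≥ 1, 0 ≤ d t)
    (heq : IsEquilibrium G f f' s k0 d k p) (hab : AsympBubbly G f' k p d) :
    0 < bubble G f' k p d 0 := by
  rcases (bubble0_nonneg hf hd heq).lt_or_eq with h | h
  · exact h
  · exfalso
    have hz : bubble G f' k p d = fun _ => 0 := funext fun t => by
      rw [bubble_formula hf hd heq t, ← h, zero_mul]
    unfold AsympBubbly at hab
    rw [hz] at hab
    simp [Filter.liminf_const] at hab

lemma step_unique (hf : ProdAssump G f f' f'') (hs : SavAssump s) {w pt x x' : ℝ}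
    (hw : 0 < w) (hx : 0 < x) (hx' : 0 < x')
    (he : G * x + pt = s w (f' x)) (he' : G * x' + pt = s w (f' x')) : x = x' := by
  have hanti := f'_anti hf
  have hf'p : ∀ y > (0:ℝ), 0 < f' y := hf.2.2.2.2.2.1
  have hG := hf.1
  by_contra hne
  wlog h : x < x' generalizing x x'
  · exact this hx' hx he' he (Ne.symm hne) (lt_of_le_of_ne (not_lt.1 h) (Ne.symm hne))
  have hR : f' x' < f' x := hanti hx hx' h
  have hle : s w (f' x') ≤ s w (f' x) := by
    have := hs.2.2.2 w hw (hf'p x' hx') (hf'p x hx) hR.le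
    simpa using this
  nlinarith

lemma path_unique (hf : ProdAssump G f f' f'') (hs : SavAssump s)
    {k' p' : ℕ → ℝ} (heq : IsEquilibrium G f f' s k0 d k p)
    (heq' : IsEquilibrium G f f' s k0 d k' p') (h0 : p 0 = p' 0) (t : ℕ) :
    k t = k' t ∧ p t = p' t := by
  induction t with
  | zero => exact ⟨heq.2.2.1.trans heq'.2.2.1.symm, h0⟩
  | succ t ih =>
    have e1 := heq.2.2.2.1 t
    have e2 := heq'.2.2.2.1 t
    rw [← ih.1, ← ih.2] at e2
    have hk := step_unique hf hs (wage_pos hf (heq.1 t)) (heq.1 (t+1)) (heq'.1 (t+1)) e1 e2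
    exact ⟨hk, by rw [heq.2.2.2.2 t, heq'.2.2.2.2 t, ih.2, hk]⟩

lemma compare (hf : ProdAssump G f f' f'') (hs : SavAssump s) {k' p' : ℕ → ℝ}
    (heq : IsEquilibrium G f f' s k0 d k p) (heq' : IsEquilibrium G f f' s k0 d k' p')
    (h0 : p 0 < p' 0) (t : ℕ) :
    k' t ≤ k t ∧ p t < p' t := by
  have hanti := f'_anti hf
  have hf'p : ∀ x > (0:ℝ), 0 < f' x := hf.2.2.2.2.2.1
  have hG := hf.1
  induction t with
  | zero => exact ⟨le_of_eq (heq'.2.2.1.trans heq.2.2.1.symm), h0⟩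
  | succ t ih =>
    have hkt := heq.1 t
    have hkt' := heq'.1 t
    have hk1 := heq.1 (t+1)
    have hk1' := heq'.1 (t+1)
    have hwpos := wage_pos hf hkt
    have hwpos' := wage_pos hf hkt'
    have hwle : wage f f' (k' t) ≤ wage f f' (k t) :=
      (wage_mono hf).monotoneOn hkt' hkt ih.1
    have e1 := heq.2.2.2.1 t
    have e2 := heq'.2.2.2.1 t
    rw [wage_eq] at e1 e2
    have hkle : k' (t+1) ≤ k (t+1) := by
      by_contra hcon
      push_neg at hcon
      have hRlt : f' (k' (t+1)) < f' (k (t+1)) := hanti hk1 hk1' hcon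
      have hs1 : s (wage f f' (k' t)) (f' (k' (t+1))) ≤ s (wage f f' (k t)) (f' (k' (t+1))) := by
        have := ((hs.2.2.1 _ (hf'p _ hk1')).monotoneOn) hwpos' hwpos hwle
        simpa using this
      have hs2 : s (wage f f' (k t)) (f' (k' (t+1))) ≤ s (wage f f' (k t)) (f' (k (t+1))) := by
        have := hs.2.2.2 _ hwpos (hf'p _ hk1') (hf'p _ hk1) hRlt.le
        simpa using this
      nlinarith [ih.2]
    have hRge : f' (k (t+1)) ≤ f' (k' (t+1)) := by
      rcases eq_or_lt_of_le hkle with h | h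
      · rw [h]
      · exact (hanti hk1' hk1 h).le
    have hpt : 0 ≤ p t := heq.2.1 t
    have q1 := heq.2.2.2.2 t
    have q2 := heq'.2.2.2.2 t
    have hdiv : f' (k (t+1)) / G ≤ f' (k' (t+1)) / G :=
      (div_le_div_iff_of_pos_right hG).mpr hRge
    refine ⟨hkle, ?_⟩
    rw [q1, q2]
    have h1 : f' (k (t+1)) / G * p t < f' (k (t+1)) / G * p' t :=
      mul_lt_mul_of_pos_left ih.2 (div_pos (hf'p _ hk1) hG)
    have h2 : f' (k (t+1)) / G * p' t ≤ f' (k' (t+1)) / G * p' t :=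
      mul_le_mul_of_nonneg_right hdiv (le_trans hpt ih.2.le)
    linarith

lemma delta_ge (hf : ProdAssump G f f' f'') (hs : SavAssump s) {k' p' : ℕ → ℝ}
    (heq : IsEquilibrium G f f' s k0 d k p) (heq' : IsEquilibrium G f f' s k0 d k' p')
    (h0 : p 0 < p' 0) (t : ℕ) :
    PiP G f' k' t * (p' 0 - p 0) ≤ p' t - p t ∧
    PiP G f' k t * (p' 0 - p 0) ≤ p' t - p t := by
  have hG := hf.1
  have hGi : (0:ℝ) < G⁻¹ := inv_pos.2 hG
  have hf'p : ∀ x > (0:ℝ), 0 < f' x := hf.2.2.2.2.2.1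
  have hanti := f'_anti hf
  induction t with
  | zero => simp [PiP]
  | succ t ih =>
    have hcmp1 := compare hf hs heq heq' h0 (t+1)
    have hR : f' (k (t+1)) ≤ f' (k' (t+1)) := by
      rcases eq_or_lt_of_le hcmp1.1 with h | h
      · rw [h]
      · exact (hanti (heq'.1 (t+1)) (heq.1 (t+1)) h).le
    have q1 := heq.2.2.2.2 t
    have q2 := heq'.2.2.2.2 t
    have hRpos := hf'p _ (heq.1 (t+1))
    have hR'pos := hf'p _ (heq'.1 (t+1))
    simp only [div_eq_mul_inv] at q1 q2
    have hd1 : f' (k' (t+1)) * G⁻¹ * (p' t - p t) ≤ p' (t+1) - p (t+1) := by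
      rw [q1, q2]
      nlinarith [mul_nonneg (mul_nonneg (sub_nonneg.2 hR) hGi.le) (heq.2.1 t)]
    have hd2 : f' (k (t+1)) * G⁻¹ * (p' t - p t) ≤ p' (t+1) - p (t+1) := by
      rw [q1, q2]
      nlinarith [mul_nonneg (mul_nonneg (sub_nonneg.2 hR) hGi.le) (heq'.2.1 t)]
    have hPs' : PiP G f' k' (t+1) = PiP G f' k' t * (f' (k' (t+1)) / G) :=
      Finset.prod_range_succ _ t
    have hPs : PiP G f' k (t+1) = PiP G f' k t * (f' (k (t+1)) / G) :=
      Finset.prod_range_succ _ t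
    constructor
    · rw [hPs']
      calc PiP G f' k' t * (f' (k' (t+1)) / G) * (p' 0 - p 0)
          = (PiP G f' k' t * (p' 0 - p 0)) * (f' (k' (t+1)) / G) := by ring
        _ ≤ (p' t - p t) * (f' (k' (t+1)) / G) :=
            mul_le_mul_of_nonneg_right ih.1 (div_pos hR'pos hG).le
        _ ≤ p' (t+1) - p (t+1) := by
            rw [mul_comm, div_eq_mul_inv]; exact hd1
    · rw [hPs]
      calc PiP G f' k t * (f' (k (t+1)) / G) * (p' 0 - p 0)
          = (PiP G f' k t * (p' 0 - p 0)) * (f' (k (t+1)) / G) := by ring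
        _ ≤ (p' t - p t) * (f' (k (t+1)) / G) :=
            mul_le_mul_of_nonneg_right ih.2 (div_pos hRpos hG).le
        _ ≤ p' (t+1) - p (t+1) := by
            rw [mul_comm, div_eq_mul_inv]; exact hd2

lemma no_higher (hf : ProdAssump G f f' f'') (hs : SavAssump s) {k' p' : ℕ → ℝ}
    (hd : ∀ t ≥ 1, 0 ≤ d t)
    (heq : IsEquilibrium G f f' s k0 d k p) (hab : AsympBubbly G f' k p d)
    (heq' : IsEquilibrium G f f' s k0 d k' p') (h0 : p 0 < p' 0) : False := by
  have hG := hf.1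
  have hf'p : ∀ x > (0:ℝ), 0 < f' x := hf.2.2.2.2.2.1
  have hanti := f'_anti hf
  have hk := heq.1
  have hk' := heq'.1
  have hcmp := compare hf hs heq heq' h0
  have hdelta := delta_ge hf hs heq heq' h0
  have hRle : ∀ i : ℕ, f' (k (i+1)) ≤ f' (k' (i+1)) := by
    intro i
    rcases eq_or_lt_of_le (hcmp (i+1)).1 with h | h
    · rw [h]
    · exact (hanti (hk' (i+1)) (hk (i+1)) h).le
  obtain ⟨M, hM0, hM00, hMk⟩ := k_bound hf hs heq
  have hMk' : ∀ t, k' t ≤ M := fun t => le_trans (hcmp t).1 (hMk t)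
  set W := wage f f' M with hWdef
  have hWp : 0 < W := wage_pos hf hM0
  have hpW : ∀ t, p t < W ∧ p' t < W := by
    intro t
    have h1 := (eq_basic hf hs heq t).2.1
    have h2 := (eq_basic hf hs heq' t).2.1
    have hw1 : wage f f' (k t) ≤ W := (wage_mono hf).monotoneOn (hk t) hM0 (hMk t)
    have hw2 : wage f f' (k' t) ≤ W := (wage_mono hf).monotoneOn (hk' t) hM0 (hMk' t)
    exact ⟨lt_of_lt_of_le h1 hw1, lt_of_lt_of_le h2 hw2⟩
  have hb0 := bubble0_pos hf hd heq hab
  have hbf := bubble_formula hf hd heq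
  have hbW : ∀ t, bubble G f' k p d t ≤ W := fun t => by
    have h1 := fundval_nonneg hf hd hk t
    have h2 := (hpW t).1
    unfold bubble
    linarith
  set c := atTop.liminf (bubble G f' k p d) / 2 with hcdef
  have hc0 : 0 < c := by
    unfold AsympBubbly at hab
    rw [hcdef]
    linarith
  have hPkpos0 := PiP_pos hf hk
  have hblb : IsBoundedUnder (· ≥ ·) atTop (bubble G f' k p d) := by
    refine ⟨0, eventually_map.2 (Eventually.of_forall (fun t => ?_))⟩
    rw [bubble_formula hf hd heq t]
    exact mul_nonneg hb0.le (hPkpos0 t).le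
  have hev1 : ∀ᶠ t in atTop, c < bubble G f' k p d t := by
    apply eventually_lt_of_lt_liminf _ hblb
    unfold AsympBubbly at hab
    rw [hcdef]
    linarith
  have hPkpos := PiP_pos hf hk
  have hPk'pos := PiP_pos hf hk'
  have hevPi : ∀ᶠ t in atTop, c / bubble G f' k p d 0 ≤ PiP G f' k t := by
    filter_upwards [hev1] with t ht
    rw [hbf t] at ht
    rw [div_le_iff₀ hb0]
    nlinarith
  set δ0 := p' 0 - p 0 with hδ0
  have hδ0p : 0 < δ0 := by rw [hδ0]; linarith
  have hPk'W : ∀ t, PiP G f' k' t ≤ W / δ0 := by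
    intro t
    have h1 := (hdelta t).1
    have h2 : p' t - p t ≤ W := by
      have := (hpW t).2
      have := heq.2.1 t
      linarith
    rw [le_div_iff₀ hδ0p]
    nlinarith
  have hPle : ∀ t, PiP G f' k t ≤ PiP G f' k' t := by
    intro t
    unfold PiP
    apply Finset.prod_le_prod
    · intro i _
      exact (div_pos (hf'p _ (hk (i+1))) hG).le
    · intro i _
      exact (div_le_div_iff_of_pos_right hG).mpr (hRle i)
  set B := (W / δ0) / (c / bubble G f' k p d 0) * G with hB
  have hcb : 0 < c / bubble G f' k p d 0 := div_pos hc0 hb0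
  have hevR : ∀ᶠ t in atTop, f' (k' (t+1)) ≤ B := by
    filter_upwards [hevPi] with t ht
    have hlow : c / bubble G f' k p d 0 ≤ PiP G f' k' t := le_trans ht (hPle t)
    have hup : PiP G f' k' (t+1) ≤ W / δ0 := hPk'W (t+1)
    have hPs' : PiP G f' k' (t+1) = PiP G f' k' t * (f' (k' (t+1)) / G) :=
      Finset.prod_range_succ _ t
    have hRG : 0 < f' (k' (t+1)) / G := div_pos (hf'p _ (hk' (t+1))) hG
    have step : (c / bubble G f' k p d 0) * (f' (k' (t+1)) / G) ≤ W / δ0 := by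
      calc (c / bubble G f' k p d 0) * (f' (k' (t+1)) / G)
          ≤ PiP G f' k' t * (f' (k' (t+1)) / G) := mul_le_mul_of_nonneg_right hlow hRG.le
        _ = PiP G f' k' (t+1) := hPs'.symm
        _ ≤ W / δ0 := hup
    have step2 : f' (k' (t+1)) / G * (c / bubble G f' k p d 0) ≤ W / δ0 := by
      rw [mul_comm]; exact step
    have h2 : f' (k' (t+1)) / G ≤ (W / δ0) / (c / bubble G f' k p d 0) :=
      (le_div_iff₀ hcb).2 step2
    rw [hB]
    calc f' (k' (t+1)) = f' (k' (t+1)) / G * G := by field_simp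
      _ ≤ (W / δ0) / (c / bubble G f' k p d 0) * G :=
          mul_le_mul_of_nonneg_right h2 hG.le
  have h8 : Tendsto f' (𝓝[>] (0:ℝ)) atTop := hf.2.2.2.2.2.2.2.1
  have hevB : ∀ᶠ x in 𝓝[>] (0:ℝ), B < f' x := h8.eventually (eventually_gt_atTop B)
  obtain ⟨u, hu, huB⟩ := mem_nhdsGT_iff_exists_Ioo_subset.1 hevB
  have hu0 : (0:ℝ) < u := hu
  have hevk' : ∀ᶠ t in atTop, u/2 ≤ k' (t+1) := by
    filter_upwards [hevR] with t ht
    by_contra hcon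
    push_neg at hcon
    have hmem : k' (t+1) ∈ Ioo (0:ℝ) u := ⟨hk' (t+1), by linarith⟩
    have := huB hmem
    simp only [Set.mem_setOf_eq] at this
    linarith
  -- rho convergence
  set ρ := fun t => PiP G f' k' t / PiP G f' k t with hρ
  have hρpos : ∀ t, 0 < ρ t := fun t => div_pos (hPk'pos t) (hPkpos t)
  have hfactor_eq : ∀ t, ρ (t+1) = ρ t * (f' (k' (t+1)) / f' (k (t+1))) := by
    intro t
    have h1 : PiP G f' k (t+1) = PiP G f' k t * (f' (k (t+1))/G) := Finset.prod_range_succ _ t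
    have h2 : PiP G f' k' (t+1) = PiP G f' k' t * (f' (k' (t+1))/G) := Finset.prod_range_succ _ t
    simp only [hρ]
    rw [h1, h2]
    have n1 : PiP G f' k t ≠ 0 := ne_of_gt (hPkpos t)
    have n2 : f' (k (t+1)) ≠ 0 := ne_of_gt (hf'p _ (hk (t+1)))
    have n3 : (G:ℝ) ≠ 0 := ne_of_gt hG
    field_simp
    try ring
  have hρmono : Monotone ρ := by
    apply monotone_nat_of_le_succ
    intro t
    rw [hfactor_eq t]
    have hfac : 1 ≤ f' (k' (t+1)) / f' (k (t+1)) :=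
      (one_le_div (hf'p _ (hk (t+1)))).2 (hRle t)
    nlinarith [hρpos t]
  have hevρ : ∀ᶠ t in atTop, ρ t ≤ (W/δ0) / (c / bubble G f' k p d 0) := by
    filter_upwards [hevPi] with t ht
    exact div_le_div₀ (by positivity) (hPk'W t) hcb ht
  obtain ⟨N1, hN1⟩ := eventually_atTop.1 hevρ
  have hbdd2 : BddAbove (range ρ) := by
    refine ⟨max (ρ N1) ((W/δ0)/(c / bubble G f' k p d 0)), ?_⟩
    rintro y ⟨t, rfl⟩
    rcases le_total t N1 with h | h
    · exact le_trans (hρmono h) (le_max_left _ _)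
    · exact le_trans (hN1 t h) (le_max_right _ _)
  have hρlim := tendsto_atTop_ciSup hρmono hbdd2
  have hℓpos : 0 < ⨆ t, ρ t := lt_of_lt_of_le (hρpos 0) (le_ciSup hbdd2 0)
  have hratio : Tendsto (fun t => ρ (t+1) / ρ t) atTop (𝓝 1) := by
    have h1 : Tendsto (fun t => ρ (t+1)) atTop (𝓝 (⨆ t, ρ t)) :=
      hρlim.comp (tendsto_add_atTop_nat 1)
    have h2 := h1.div hρlim (ne_of_gt hℓpos)
    rw [div_self (ne_of_gt hℓpos)] at h2
    exact h2
  have hratio_eq : ∀ t, ρ (t+1) / ρ t = f' (k' (t+1)) / f' (k (t+1)) := by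
    intro t
    rw [hfactor_eq t, mul_comm, mul_div_assoc, div_self (ne_of_gt (hρpos t)), mul_one]
  have hRratio : Tendsto (fun t => f' (k' (t+1)) / f' (k (t+1))) atTop (𝓝 1) :=
    hratio.congr hratio_eq
  have hRub : ∀ᶠ t in atTop, f' (k (t+1)) ≤ B := by
    filter_upwards [hevR] with t ht
    exact le_trans (hRle t) ht
  have hdiff : Tendsto (fun t => f' (k' (t+1)) - f' (k (t+1))) atTop (𝓝 0) := by
    apply squeeze_zero' (Eventually.of_forall (fun t => sub_nonneg.2 (hRle t)))
      (g := fun t => B * (f' (k' (t+1)) / f' (k (t+1)) - 1))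
    · filter_upwards [hRub] with t ht
      have hRp := hf'p _ (hk (t+1))
      have hrw : f' (k' (t+1)) - f' (k (t+1))
          = f' (k (t+1)) * (f' (k' (t+1)) / f' (k (t+1)) - 1) := by
        field_simp
      rw [hrw]
      have hnn : 0 ≤ f' (k' (t+1)) / f' (k (t+1)) - 1 := by
        rw [sub_nonneg, le_div_iff₀ hRp]
        linarith [hRle t]
      exact mul_le_mul_of_nonneg_right ht hnn
    · have h2 := (hRratio.sub_const 1).const_mul B
      simpa using h2
  have hdiffF : Tendsto (fun t => f' (k' t) - f' (k t)) atTop (𝓝 0) :=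
    (tendsto_add_atTop_iff_nat 1).1 hdiff
  set ε := (c / bubble G f' k p d 0) * δ0 with hε
  have hε0 : 0 < ε := mul_pos hcb hδ0p
  have hevδ : ∀ᶠ t in atTop, ε ≤ p' t - p t := by
    filter_upwards [hevPi] with t ht
    have h1 := (hdelta t).2
    rw [hε]
    nlinarith
  obtain ⟨N, hN⟩ := eventually_atTop.1 (hevδ.and hevk')
  set T := fun j : ℕ => N + 1 + j with hT
  have hTN : ∀ j, N ≤ T j := fun j => by simp [hT]; omega
  have hk'lb : ∀ j, u/2 ≤ k' (T j) := by
    intro j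
    have := (hN (N + j) (by omega)).2
    simpa [hT, show N + j + 1 = N + 1 + j by omega] using this
  have hk'lb1 : ∀ j, u/2 ≤ k' (T j + 1) := fun j => (hN (T j) (hTN j)).2
  have hδlb : ∀ j, ε ≤ p' (T j) - p (T j) := fun j => (hN (T j) (hTN j)).1
  set I := Icc (u/2) M with hI
  set uu := fun j : ℕ => (k (T j), (k' (T j), (k (T j + 1), k' (T j + 1)))) with huu
  have hmem : ∀ j, uu j ∈ I ×ˢ (I ×ˢ (I ×ˢ I)) := by
    intro j
    refine ⟨⟨le_trans (hk'lb j) (hcmp (T j)).1, hMk _⟩,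
      ⟨hk'lb j, hMk' _⟩, ⟨le_trans (hk'lb1 j) (hcmp (T j + 1)).1, hMk _⟩,
      hk'lb1 j, hMk' _⟩
  have hcpt : IsCompact (I ×ˢ (I ×ˢ (I ×ˢ I))) :=
    isCompact_Icc.prod (isCompact_Icc.prod (isCompact_Icc.prod isCompact_Icc))
  obtain ⟨z, hz, φ, hφ, hzconv⟩ := hcpt.tendsto_subseq hmem
  have hz1 : z.1 ∈ I := hz.1
  have hz21 : z.2.1 ∈ I := hz.2.1
  have hz31 : z.2.2.1 ∈ I := hz.2.2.1
  have hz32 : z.2.2.2 ∈ I := hz.2.2.2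
  have hu2 : (0:ℝ) < u/2 := by linarith
  have hz1pos : 0 < z.1 := lt_of_lt_of_le hu2 hz1.1
  have hz21pos : 0 < z.2.1 := lt_of_lt_of_le hu2 hz21.1
  have hz31pos : 0 < z.2.2.1 := lt_of_lt_of_le hu2 hz31.1
  have hz32pos : 0 < z.2.2.2 := lt_of_lt_of_le hu2 hz32.1
  have t1 : Tendsto (fun j => k (T (φ j))) atTop (𝓝 z.1) :=
    (continuous_fst.tendsto z).comp hzconv
  have hsnd : Tendsto (fun j => (uu (φ j)).2) atTop (𝓝 z.2) :=
    (continuous_snd.tendsto z).comp hzconv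
  have t2 : Tendsto (fun j => k' (T (φ j))) atTop (𝓝 z.2.1) :=
    (continuous_fst.tendsto z.2).comp hsnd
  have hsnd2 : Tendsto (fun j => (uu (φ j)).2.2) atTop (𝓝 z.2.2) :=
    (continuous_snd.tendsto z.2).comp hsnd
  have t3 : Tendsto (fun j => k (T (φ j) + 1)) atTop (𝓝 z.2.2.1) :=
    (continuous_fst.tendsto z.2.2).comp hsnd2
  have t4 : Tendsto (fun j => k' (T (φ j) + 1)) atTop (𝓝 z.2.2.2) :=
    (continuous_snd.tendsto z.2.2).comp hsnd2
  have hTphi : Tendsto (fun j => T (φ j)) atTop atTop := by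
    apply tendsto_atTop_mono (fun j => ?_) hφ.tendsto_atTop
    simp only [hT]
    omega
  have hTphi1 : Tendsto (fun j => T (φ j) + 1) atTop atTop := by
    apply tendsto_atTop_mono (fun j => ?_) hTphi
    omega
  have hf'cont : ∀ x : ℝ, 0 < x → ContinuousAt f' x := fun x hx =>
    (hf.2.2.2.1 x hx).differentiableAt.continuousAt
  have hdz0 : Tendsto (fun j => f' (k' (T (φ j))) - f' (k (T (φ j)))) atTop (𝓝 0) :=
    hdiffF.comp hTphi
  have hdz1 : Tendsto (fun j => f' (k' (T (φ j) + 1)) - f' (k (T (φ j) + 1))) atTop (𝓝 0) :=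
    hdiffF.comp hTphi1
  have c1 : Tendsto (fun j => f' (k (T (φ j)))) atTop (𝓝 (f' z.1)) :=
    ((hf'cont _ hz1pos).tendsto).comp t1
  have c2 : Tendsto (fun j => f' (k' (T (φ j)))) atTop (𝓝 (f' z.2.1)) :=
    ((hf'cont _ hz21pos).tendsto).comp t2
  have c3 : Tendsto (fun j => f' (k (T (φ j) + 1))) atTop (𝓝 (f' z.2.2.1)) :=
    ((hf'cont _ hz31pos).tendsto).comp t3
  have c4 : Tendsto (fun j => f' (k' (T (φ j) + 1))) atTop (𝓝 (f' z.2.2.2)) :=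
    ((hf'cont _ hz32pos).tendsto).comp t4
  have he1 : f' z.2.1 = f' z.1 := by
    have := tendsto_nhds_unique (c2.sub c1) hdz0
    linarith
  have he2 : f' z.2.2.2 = f' z.2.2.1 := by
    have := tendsto_nhds_unique (c4.sub c3) hdz1
    linarith
  have hzeq1 : z.2.1 = z.1 := (f'_anti hf).injOn hz21pos hz1pos he1
  have hzeq2 : z.2.2.2 = z.2.2.1 := (f'_anti hf).injOn hz32pos hz31pos he2
  have hrepr : ∀ t : ℕ, p' t - p t
      = (s (wage f f' (k' t)) (f' (k' (t+1))) - G * k' (t+1))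
        - (s (wage f f' (k t)) (f' (k (t+1))) - G * k (t+1)) := by
    intro t
    have e1 := heq.2.2.2.1 t
    have e2 := heq'.2.2.2.1 t
    rw [wage_eq] at e1 e2
    linarith
  have hwcont : ∀ x : ℝ, 0 < x → ContinuousAt (wage f f') x := by
    intro x hx
    have h1 := (hf.2.2.1 x hx).differentiableAt.continuousAt
    have h2 := (hf.2.2.2.1 x hx).differentiableAt.continuousAt
    exact h1.sub (continuousAt_id.mul h2)
  have hscont : ContinuousAt (fun wR : ℝ × ℝ => s wR.1 wR.2) (wage f f' z.1, f' z.2.2.1) := by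
    apply hs.1.continuousAt
    apply IsOpen.mem_nhds (isOpen_Ioi.prod isOpen_Ioi)
    exact ⟨wage_pos hf hz1pos, hf'p _ hz31pos⟩
  have w1 : Tendsto (fun j => wage f f' (k (T (φ j)))) atTop (𝓝 (wage f f' z.1)) :=
    ((hwcont _ hz1pos).tendsto).comp t1
  have t2' : Tendsto (fun j => k' (T (φ j))) atTop (𝓝 z.1) := hzeq1 ▸ t2
  have w2 : Tendsto (fun j => wage f f' (k' (T (φ j)))) atTop (𝓝 (wage f f' z.1)) :=
    ((hwcont _ hz1pos).tendsto).comp t2'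
  have c4' : Tendsto (fun j => f' (k' (T (φ j) + 1))) atTop (𝓝 (f' z.2.2.1)) := he2 ▸ c4
  have sA : Tendsto (fun j => s (wage f f' (k' (T (φ j)))) (f' (k' (T (φ j) + 1)))) atTop
      (𝓝 (s (wage f f' z.1) (f' z.2.2.1))) :=
    (hscont.tendsto).comp (w2.prodMk_nhds c4')
  have sB : Tendsto (fun j => s (wage f f' (k (T (φ j)))) (f' (k (T (φ j) + 1)))) atTop
      (𝓝 (s (wage f f' z.1) (f' z.2.2.1))) :=
    (hscont.tendsto).comp (w1.prodMk_nhds c3)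
  have gk : Tendsto (fun j => G * k (T (φ j) + 1) - G * k' (T (φ j) + 1)) atTop (𝓝 0) := by
    have h := (t3.const_mul G).sub (t4.const_mul G)
    rw [hzeq2] at h
    simpa using h
  have hdconv : Tendsto (fun j => p' (T (φ j)) - p (T (φ j))) atTop (𝓝 0) := by
    have hfun : (fun j => p' (T (φ j)) - p (T (φ j)))
        = fun j => (s (wage f f' (k' (T (φ j)))) (f' (k' (T (φ j) + 1)))
            - s (wage f f' (k (T (φ j)))) (f' (k (T (φ j) + 1))))
          + (G * k (T (φ j) + 1) - G * k' (T (φ j) + 1)) := by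
      funext j
      linear_combination (hrepr (T (φ j)))
    rw [hfun]
    have h := (sA.sub sB).add gk
    simpa using h
  have hfinal : ε ≤ 0 := ge_of_tendsto hdconv (Eventually.of_forall (fun j => hδlb (φ j)))
  linarith

end Aux

/-- Corollary `cor:unique_bubble`: if `G_d < G`, there is at most
one asymptotically bubbly equilibrium, and it has the largest initial price among
all equilibria. -/
theorem stmt12 (G : ℝ) (f f' f'' : ℝ → ℝ) (s : ℝ → ℝ → ℝ)
    (hf : ProdAssump G f f' f'') (hs : SavAssump s)
    (k0 : ℝ) (hk0 : 0 < k0) (d : ℕ → ℝ) (hd : ∀ t ≥ 1, 0 ≤ d t)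
    (hGd : GdGrowth G d < (G : EReal))
    (k p : ℕ → ℝ)
    (heq : IsEquilibrium G f f' s k0 d k p)
    (hab : AsympBubbly G f' k p d) :
    (∀ k' p' : ℕ → ℝ, IsEquilibrium G f f' s k0 d k' p' →
      AsympBubbly G f' k' p' d → (∀ t, k t = k' t) ∧ (∀ t, p t = p' t)) ∧
    (∀ k' p' : ℕ → ℝ, IsEquilibrium G f f' s k0 d k' p' → p' 0 ≤ p 0) := by
  constructor
  · intro k' p' heq' hab'
    have h1 : p' 0 ≤ p 0 := by
      by_contra h
      push_neg at h
      exact no_higher hf hs hd heq hab heq' h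
    have h2 : p 0 ≤ p' 0 := by
      by_contra h
      push_neg at h
      exact no_higher hf hs hd heq' hab' heq h
    have h0 : p 0 = p' 0 := le_antisymm h2 h1
    exact ⟨fun t => (path_unique hf hs heq heq' h0 t).1,
      fun t => (path_unique hf hs heq heq' h0 t).2⟩
  · intro k' p' heq'
    by_contra h
    push_neg at h
    exact no_higher hf hs hd heq hab heq' h


end
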